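/- Let B be an n×n complex matrix and let J₃ be the 3×3 Jordan block with zero eigenvalues. Then I_n ⊗ I₃ + B ⊗ J₃ + Bᴴ ⊗ J₃ᴴ is positive semidefinite if and only if B·Bᴴ + Bᴴ·B ≤ I_n. -/

import Mathlib

open Matrix Kronecker
open scoped ComplexOrder

/-- The 3×3 Jordan block with zero eigenvalues. -/
def J₃ : Matrix (Fin 3) (Fin 3) ℂ := !![0, 1, 0; 0, 0, 1; 0, 0, 0]

lemma J3_conjTranspose : J₃ᴴ = !![0, 0, 0; 1, 0, 0; 0, 1, 0] := by
  ext i j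
  rw [conjTranspose_apply]
  fin_cases i <;> fin_cases j <;> norm_num [J₃, vecHead, vecTail]

lemma kron_conjTranspose {n m : ℕ} (A : Matrix (Fin n) (Fin n) ℂ)
    (K : Matrix (Fin m) (Fin m) ℂ) : (A ⊗ₖ K)ᴴ = Aᴴ ⊗ₖ Kᴴ := by
  ext ⟨i, a⟩ ⟨j, b⟩
  simp [conjTranspose_apply, kroneckerMap_apply, star_mul']

lemma kron_quadform {n m : ℕ} (A : Matrix (Fin n) (Fin n) ℂ)
    (K : Matrix (Fin m) (Fin m) ℂ) (x : Fin n × Fin m → ℂ) :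
    star x ⬝ᵥ (A ⊗ₖ K) *ᵥ x
      = ∑ a : Fin m, ∑ b : Fin m,
          K a b * (star (fun i => x (i, a)) ⬝ᵥ A *ᵥ (fun i => x (i, b))) := by
  calc star x ⬝ᵥ (A ⊗ₖ K) *ᵥ x
      = ∑ r : (Fin n × Fin m) × (Fin n × Fin m),
          star (x r.1) * (A r.1.1 r.2.1 * K r.1.2 r.2.2 * x r.2) := by
        rw [Fintype.sum_prod_type]
        simp only [dotProduct, mulVec, kroneckerMap_apply, Pi.star_apply, Finset.mul_sum]
    _ = ∑ s : (Fin m × Fin m) × (Fin n × Fin n),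
          K s.1.1 s.1.2 * (star (x (s.2.1, s.1.1)) * (A s.2.1 s.2.2 * x (s.2.2, s.1.2))) :=
        Fintype.sum_equiv
          ⟨fun r => ((r.1.2, r.2.2), (r.1.1, r.2.1)), fun s => ((s.2.1, s.1.1), (s.2.2, s.1.2)),
            fun r => rfl, fun s => rfl⟩ _ _
          (fun r => by dsimp only [Equiv.coe_fn_mk]; ring)
    _ = ∑ a : Fin m, ∑ b : Fin m,
          K a b * (star (fun i => x (i, a)) ⬝ᵥ A *ᵥ (fun i => x (i, b))) := by
        rw [Fintype.sum_prod_type]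
        rw [Fintype.sum_prod_type]
        refine Finset.sum_congr rfl fun a _ => Finset.sum_congr rfl fun b _ => ?_
        rw [Fintype.sum_prod_type]
        simp only [dotProduct, mulVec, Pi.star_apply, Finset.mul_sum]

theorem kron_J3_posSemidef_iff {n : ℕ} (B : Matrix (Fin n) (Fin n) ℂ) :
    ((1 : Matrix (Fin n) (Fin n) ℂ) ⊗ₖ (1 : Matrix (Fin 3) (Fin 3) ℂ)
        + B ⊗ₖ J₃ + Bᴴ ⊗ₖ J₃ᴴ).PosSemidef ↔
      ((1 : Matrix (Fin n) (Fin n) ℂ) - (B * Bᴴ + Bᴴ * B)).PosSemidef := by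
  set M := (1 : Matrix (Fin n) (Fin n) ℂ) ⊗ₖ (1 : Matrix (Fin 3) (Fin 3) ℂ)
        + B ⊗ₖ J₃ + Bᴴ ⊗ₖ J₃ᴴ with hM
  set S := (1 : Matrix (Fin n) (Fin n) ℂ) - (B * Bᴴ + Bᴴ * B) with hS
  have hSHerm : S.IsHermitian := by
    unfold S
    simp [Matrix.IsHermitian, conjTranspose_sub, conjTranspose_add, conjTranspose_mul,
      add_comm]
  have hMHerm : M.IsHermitian := by
    unfold M
    simp only [Matrix.IsHermitian, conjTranspose_add, kron_conjTranspose,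
      conjTranspose_conjTranspose, conjTranspose_one]
    abel
  -- the key identity
  have key : ∀ x : Fin n × Fin 3 → ℂ,
      star x ⬝ᵥ M *ᵥ x
        = star ((fun i => x (i, 0)) + B *ᵥ (fun i => x (i, 1))) ⬝ᵥ
            ((fun i => x (i, 0)) + B *ᵥ (fun i => x (i, 1)))
          + star ((fun i => x (i, 2)) + Bᴴ *ᵥ (fun i => x (i, 1))) ⬝ᵥ
            ((fun i => x (i, 2)) + Bᴴ *ᵥ (fun i => x (i, 1)))
          + star (fun i => x (i, 1)) ⬝ᵥ S *ᵥ (fun i => x (i, 1)) := by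
    intro x
    set x₀ : Fin n → ℂ := fun i => x (i, 0)
    set x₁ : Fin n → ℂ := fun i => x (i, 1)
    set x₂ : Fin n → ℂ := fun i => x (i, 2)
    have hQ : star x ⬝ᵥ M *ᵥ x
        = (star x₀ ⬝ᵥ x₀ + star x₁ ⬝ᵥ x₁ + star x₂ ⬝ᵥ x₂)
          + (star x₀ ⬝ᵥ B *ᵥ x₁ + star x₁ ⬝ᵥ B *ᵥ x₂)
          + (star x₁ ⬝ᵥ Bᴴ *ᵥ x₀ + star x₂ ⬝ᵥ Bᴴ *ᵥ x₁) := by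
      unfold M
      rw [add_mulVec, add_mulVec, dotProduct_add, dotProduct_add,
        kron_quadform, kron_quadform, kron_quadform, J3_conjTranspose]
      simp [Fin.sum_univ_three, J₃, one_apply, vecHead, vecTail]
      rfl
    rw [hQ]
    simp only [star_add, add_dotProduct, dotProduct_add, star_mulVec,
      conjTranspose_conjTranspose]
    unfold S
    rw [Matrix.sub_mulVec, Matrix.add_mulVec, Matrix.one_mulVec,
      dotProduct_sub, dotProduct_add]
    have h1 : star x₁ ᵥ* Bᴴ ⬝ᵥ x₀ = star x₁ ⬝ᵥ Bᴴ *ᵥ x₀ := (dotProduct_mulVec _ _ _).symm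
    have h2 : star x₁ ᵥ* Bᴴ ⬝ᵥ B *ᵥ x₁ = star x₁ ⬝ᵥ (Bᴴ * B) *ᵥ x₁ := by
      rw [← dotProduct_mulVec, mulVec_mulVec]
    have h3 : star x₁ ᵥ* B ⬝ᵥ x₂ = star x₁ ⬝ᵥ B *ᵥ x₂ := (dotProduct_mulVec _ _ _).symm
    have h4 : star x₁ ᵥ* B ⬝ᵥ Bᴴ *ᵥ x₁ = star x₁ ⬝ᵥ (B * Bᴴ) *ᵥ x₁ := by
      rw [← dotProduct_mulVec, mulVec_mulVec]
    rw [h1, h2, h3, h4]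
    ring
  rw [posSemidef_iff_dotProduct_mulVec, posSemidef_iff_dotProduct_mulVec]
  constructor
  · rintro ⟨-, hpos⟩
    refine ⟨hSHerm, fun y => ?_⟩
    set x : Fin n × Fin 3 → ℂ := fun p =>
      if p.2 = 0 then -(B *ᵥ y) p.1 else if p.2 = 1 then y p.1 else -(Bᴴ *ᵥ y) p.1
        with hx
    have h0 : (fun i => x (i, 0)) = -(B *ᵥ y) := by funext i; simp [hx]
    have h1 : (fun i => x (i, 1)) = y := by funext i; simp [hx]
    have h2 : (fun i => x (i, 2)) = -(Bᴴ *ᵥ y) := by funext i; simp [hx]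
    have := hpos x
    rw [key x, h0, h1, h2] at this
    simpa using this
  · rintro ⟨-, hpos⟩
    refine ⟨hMHerm, fun x => ?_⟩
    rw [key x]
    refine add_nonneg (add_nonneg ?_ ?_) (hpos _) <;>
      exact dotProduct_star_self_nonneg _
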